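/- Let U ∼ π = ⊗_{i=1}^∞ Exp(2) and for a, a' > 0 define V_{a,i} = (2/(2+ia)) U_i and V_{a',i} = (2/(2+ia')) U_i. Then almost surely limsup_{d→∞} (log d)⁻¹ ∑_{i=1}^d |V_{a,i} - V_{a',i}| < ∞ (the partial sums are O(|a - a'| log d)), and limsup_{d→∞} V_{a',d}/(d V_{a,d}) = 0. -/

import Mathlib

open MeasureTheory ProbabilityTheory Filter Real Set

lemma lint_exp_expMeasure {s : ℝ} (hs : s < 2) :
    ∫⁻ x, ENNReal.ofReal (Real.exp (s * x)) ∂(expMeasure 2) = ENNReal.ofReal (2 / (2 - s)) := by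
  have hc : (0:ℝ) < 2 - s := by linarith
  have hfmeas : Measurable fun x : ℝ => ENNReal.ofReal (Real.exp (s * x)) :=
    ((measurable_id.const_mul s).exp).ennreal_ofReal
  have hpdfmeas : Measurable (gammaPDF 1 2) :=
    (measurable_gammaPDFReal 1 2).ennreal_ofReal
  rw [show expMeasure 2 = volume.withDensity (gammaPDF 1 2) from rfl,
    lintegral_withDensity_eq_lintegral_mul _ hpdfmeas hfmeas]
  simp only [Pi.mul_apply]
  have heq : ∫⁻ x, gammaPDF 1 2 x * ENNReal.ofReal (Real.exp (s * x))
      = ∫⁻ x, (Ici (0:ℝ)).indicator (fun x => ENNReal.ofReal (2 * Real.exp (-((2 - s) * x)))) x := by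
    refine lintegral_congr fun x => ?_
    have hpdf : gammaPDF 1 2 x
        = ENNReal.ofReal (if 0 ≤ x then 2 * Real.exp (-(2 * x)) else 0) :=
      exponentialPDF_eq 2 x
    by_cases hx : 0 ≤ x
    · simp only [hpdf, if_pos hx, indicator_of_mem (mem_Ici.2 hx)]
      rw [← ENNReal.ofReal_mul (by positivity)]
      congr 1
      rw [mul_assoc, ← Real.exp_add]
      ring_nf
    · simp only [hpdf, if_neg hx, ENNReal.ofReal_zero, zero_mul,
        indicator_of_notMem (fun h => hx (mem_Ici.1 h))]
  rw [heq, lintegral_indicator measurableSet_Ici]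
  have hIciIoi : ∫⁻ x in Ici (0:ℝ), ENNReal.ofReal (2 * Real.exp (-((2 - s) * x)))
      = ∫⁻ x in Ioi (0:ℝ), ENNReal.ofReal (2 * Real.exp (-((2 - s) * x))) :=
    setLIntegral_congr (Ioi_ae_eq_Ici (a := (0:ℝ))).symm
  rw [hIciIoi]
  have hint : IntegrableOn (fun x => 2 * Real.exp (-((2 - s) * x))) (Ioi (0:ℝ)) := by
    simpa only [neg_mul, IntegrableOn] using (exp_neg_integrableOn_Ioi 0 hc).const_mul 2
  rw [← ofReal_integral_eq_lintegral_ofReal hint (ae_of_all _ fun x => by positivity)]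
  congr 1
  rw [MeasureTheory.integral_const_mul]
  have hval := integral_comp_mul_left_Ioi (fun y => Real.exp (-y)) 0 hc
  simp only [mul_zero, integral_exp_neg_Ioi_zero, smul_eq_mul, mul_one] at hval
  rw [hval, div_eq_mul_inv]


lemma exp_moment {Ω : Type*} [MeasurableSpace Ω] (P : Measure Ω) (W : Ω → ℝ)
    (hW : Measurable W) (hlaw : P.map W = expMeasure 2) {s : ℝ} (hs : s < 2) :
    Integrable (fun ω => Real.exp (s * W ω)) P ∧
      ∫ ω, Real.exp (s * W ω) ∂P = 2 / (2 - s) := by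
  have hc : (0:ℝ) < 2 - s := by linarith
  have hfmeas : Measurable fun x : ℝ => ENNReal.ofReal (Real.exp (s * x)) :=
    ((measurable_id.const_mul s).exp).ennreal_ofReal
  have key : ∫⁻ ω, ENNReal.ofReal (Real.exp (s * W ω)) ∂P = ENNReal.ofReal (2 / (2 - s)) := by
    rw [← lint_exp_expMeasure hs, ← hlaw, lintegral_map hfmeas hW]
  have hnn : 0 ≤ᵐ[P] fun ω => Real.exp (s * W ω) := ae_of_all _ fun ω => (Real.exp_pos _).le
  have haesm : AEStronglyMeasurable (fun ω => Real.exp (s * W ω)) P :=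
    ((hW.const_mul s).exp).aestronglyMeasurable
  have hint : Integrable (fun ω => Real.exp (s * W ω)) P :=
    ⟨haesm, (hasFiniteIntegral_iff_ofReal hnn).2 (by rw [key]; exact ENNReal.ofReal_lt_top)⟩
  refine ⟨hint, ?_⟩
  rw [integral_eq_lintegral_of_nonneg_ae hnn haesm, key,
    ENNReal.toReal_ofReal (div_nonneg (by norm_num) hc.le)]
/-- Coupling of π_a and π_{a'} via iid Exp(2) variables: the partial sums of
|V_{a,i} - V_{a',i}| are O(log d) and V_{a',d}/(d V_{a,d}) has limsup 0, almost surely. -/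
theorem coupling_pi_a_pi_a' {Ω : Type*} [MeasurableSpace Ω] (P : Measure Ω)
    [IsProbabilityMeasure P] (a a' : ℝ) (ha : 0 < a) (ha' : 0 < a')
    (U : ℕ → Ω → ℝ) (hmeas : ∀ i, Measurable (U i))
    (hindep : iIndepFun U P)
    (hlaw : ∀ i, P.map (U i) = expMeasure 2)
    (V : ℝ → ℕ → Ω → ℝ)
    (hV : ∀ (c : ℝ) (i : ℕ) (ω : Ω), V c i ω = (2 / (2 + i * c)) * U i ω) :
    (∀ᵐ ω ∂P, IsBoundedUnder (· ≤ ·) atTop (fun d : ℕ =>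
      (Real.log d)⁻¹ * ∑ i ∈ Finset.Icc 1 d, |V a i ω - V a' i ω|)) ∧
    (∀ᵐ ω ∂P, atTop.limsup (fun d : ℕ => V a' d ω / (d * V a d ω)) = 0) := by
  -- almost sure nonnegativity of all the U i
  have hU0 : ∀ᵐ ω ∂P, ∀ i, 0 ≤ U i ω := by
    rw [ae_all_iff]
    intro i
    have hset : {ω | ¬ 0 ≤ U i ω} = U i ⁻¹' Iio 0 := by ext ω; simp [not_le]
    rw [ae_iff, hset, ← Measure.map_apply (hmeas i) measurableSet_Iio, hlaw i,
      show expMeasure 2 = volume.withDensity (gammaPDF 1 2) from rfl,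
      withDensity_apply _ measurableSet_Iio]
    exact lintegral_gammaPDF_of_nonpos le_rfl
  -- the normalized variables X i = U i / i
  set X : ℕ → Ω → ℝ := fun i ω => (i : ℝ)⁻¹ * U i ω with hXdef
  have hXmeas : ∀ i, Measurable (X i) := fun i => (hmeas i).const_mul _
  have hXindep : iIndepFun X P :=
    hindep.comp (fun i x => (i : ℝ)⁻¹ * x) (fun i => measurable_id.const_mul _)
  have hinv2 : ∀ i : ℕ, 1 ≤ i → ((i : ℝ)⁻¹ < 2 ∧ 0 ≤ (i:ℝ)⁻¹ ∧ (i:ℝ)⁻¹ ≤ 1) := by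
    intro i hi
    have h1 : (1:ℝ) ≤ (i:ℝ) := by exact_mod_cast hi
    have h0 : (0:ℝ) < (i:ℝ) := lt_of_lt_of_le one_pos h1
    refine ⟨lt_of_le_of_lt ?_ one_lt_two, by positivity, ?_⟩ <;>
      · rw [inv_le_one_iff₀] <;> first | exact Or.inr h1 | exact h1
  -- integrability of exp (1 * X i)
  have hXint : ∀ i : ℕ, 1 ≤ i → Integrable (fun ω => Real.exp (1 * X i ω)) P := by
    intro i hi
    have h := (exp_moment P (U i) (hmeas i) (hlaw i) (hinv2 i hi).1).1
    refine h.congr (ae_of_all _ fun ω => ?_)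
    simp [hXdef]
  -- mgf bound for each X i
  have hmgf : ∀ i : ℕ, 1 ≤ i → mgf (X i) P 1 ≤ Real.exp (i : ℝ)⁻¹ := by
    intro i hi
    obtain ⟨hs2, hs0, hs1⟩ := hinv2 i hi
    have hval : mgf (X i) P 1 = 2 / (2 - (i:ℝ)⁻¹) := by
      have h2 := (exp_moment P (U i) (hmeas i) (hlaw i) hs2).2
      rw [mgf, ← h2]
      refine integral_congr_ae (ae_of_all _ fun ω => ?_)
      simp [hXdef]
    rw [hval]
    have hc : (0:ℝ) < 2 - (i:ℝ)⁻¹ := by linarith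
    have hexp := Real.add_one_le_exp ((i:ℝ)⁻¹)
    rw [div_le_iff₀ hc]
    nlinarith [hexp, hs0, hs1]
  -- the bad events
  set A : ℕ → Set Ω := fun d =>
    {ω | 3 * Real.log d ≤ (∑ i ∈ Finset.Icc 1 d, X i) ω} with hAdef
  -- Chernoff bound
  have hA : ∀ d : ℕ, 1 ≤ d → P (A d) ≤ ENNReal.ofReal (Real.exp 1 / (d : ℝ)^2) := by
    intro d hd
    have hd0 : (0:ℝ) < (d:ℝ) := by exact_mod_cast hd
    have h_int : Integrable (fun ω => Real.exp (1 * (∑ i ∈ Finset.Icc 1 d, X i) ω)) P :=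
      hXindep.integrable_exp_mul_sum hXmeas
        (fun i hi => hXint i (Finset.mem_Icc.1 hi).1)
    have hchern := measure_ge_le_exp_mul_mgf (μ := P) (X := ∑ i ∈ Finset.Icc 1 d, X i)
      (t := 1) (3 * Real.log d) zero_le_one h_int
    have hprod := hXindep.mgf_sum hXmeas (t := 1) (Finset.Icc 1 d)
    have hharm : (∑ i ∈ Finset.Icc 1 d, (i:ℝ)⁻¹) ≤ 1 + Real.log d := by
      have hc : (∑ i ∈ Finset.Icc 1 d, (i:ℝ)⁻¹) = ((harmonic d : ℚ) : ℝ) := by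
        rw [harmonic_eq_sum_Icc]; push_cast; ring
      rw [hc]
      exact harmonic_le_one_add_log d
    have hmgfsum : mgf (∑ i ∈ Finset.Icc 1 d, X i) P 1 ≤ Real.exp (1 + Real.log d) := by
      rw [hprod]
      calc ∏ i ∈ Finset.Icc 1 d, mgf (X i) P 1
          ≤ ∏ i ∈ Finset.Icc 1 d, Real.exp (i : ℝ)⁻¹ :=
            Finset.prod_le_prod (fun i _ => mgf_nonneg)
              (fun i hi => hmgf i (Finset.mem_Icc.1 hi).1)
        _ = Real.exp (∑ i ∈ Finset.Icc 1 d, (i:ℝ)⁻¹) := (Real.exp_sum _ _).symm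
        _ ≤ Real.exp (1 + Real.log d) := Real.exp_le_exp.2 hharm
    have hfinal : (P (A d)).toReal ≤ Real.exp 1 / (d : ℝ)^2 := by
      refine le_trans (le_trans (le_of_eq rfl) hchern) ?_
      have h1 : Real.exp (-1 * (3 * Real.log d)) * mgf (∑ i ∈ Finset.Icc 1 d, X i) P 1
          ≤ Real.exp (-1 * (3 * Real.log d)) * Real.exp (1 + Real.log d) :=
        mul_le_mul_of_nonneg_left hmgfsum (Real.exp_pos _).le
      refine h1.trans (le_of_eq ?_)
      rw [← Real.exp_add]
      have h2 : -1 * (3 * Real.log d) + (1 + Real.log d) = 1 - 2 * Real.log d := by ring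
      rw [h2, Real.exp_sub]
      congr 1
      rw [show (2:ℝ) * Real.log d = ((2:ℕ):ℝ) * Real.log d by norm_num,
        Real.exp_nat_mul, Real.exp_log hd0]
    calc P (A d) = ENNReal.ofReal ((P (A d)).toReal) :=
          (ENNReal.ofReal_toReal (measure_ne_top _ _)).symm
      _ ≤ ENNReal.ofReal (Real.exp 1 / (d : ℝ)^2) := ENNReal.ofReal_le_ofReal hfinal
  -- uniform summable bound
  have hB : ∀ d : ℕ, P (A d) ≤ ENNReal.ofReal (9 * Real.exp 1 / ((d : ℝ) + 1)^2) := by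
    intro d
    rcases Nat.eq_zero_or_pos d with h0 | h1
    · subst h0
      refine le_trans (prob_le_one) (ENNReal.one_le_ofReal.2 ?_)
      norm_num
      nlinarith [Real.add_one_le_exp 1]
    · refine (hA d h1).trans (ENNReal.ofReal_le_ofReal ?_)
      have hd0 : (0:ℝ) < (d:ℝ) := by exact_mod_cast h1
      have hd1 : (1:ℝ) ≤ (d:ℝ) := by exact_mod_cast h1
      rw [div_le_div_iff₀ (by positivity) (by positivity)]
      have h8 : ((d:ℝ)+1)^2 ≤ 9 * (d:ℝ)^2 := by nlinarith
      nlinarith [mul_le_mul_of_nonneg_left h8 (Real.exp_pos 1).le]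
  have hsummable : Summable (fun d : ℕ => 9 * Real.exp 1 / ((d:ℝ) + 1)^2) := by
    have h := (summable_nat_add_iff (f := fun n : ℕ => 1/(n:ℝ)^2) 1).2
      (Real.summable_one_div_nat_pow.2 one_lt_two)
    refine (h.mul_left (9 * Real.exp 1)).congr fun d => ?_
    push_cast
    ring
  have hsum : (∑' d, P (A d)) ≠ ⊤ := by
    refine ne_top_of_le_ne_top ?_ (ENNReal.tsum_le_tsum hB)
    rw [← ENNReal.ofReal_tsum_of_nonneg (fun n => by positivity) hsummable]
    exact ENNReal.ofReal_ne_top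
  have hBC : ∀ᵐ ω ∂P, ∀ᶠ d in atTop, ω ∉ A d := ae_eventually_notMem hsum
  constructor
  · -- first part
    set K : ℝ := 2 * |a - a'| / (a * a') with hKdef
    have hK : 0 ≤ K := by positivity
    filter_upwards [hU0, hBC] with ω h0 hev
    refine isBoundedUnder_of_eventually_le (a := 3 * K) ?_
    filter_upwards [hev, eventually_ge_atTop 2] with d hdA hd2
    have hd1R : (1:ℝ) < (d:ℝ) := by exact_mod_cast hd2
    have hlog : 0 < Real.log d := Real.log_pos hd1R
    -- termwise bound
    have hterm : ∀ i ∈ Finset.Icc 1 d, |V a i ω - V a' i ω| ≤ K * X i ω := by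
      intro i hi
      have hi1 : (1:ℝ) ≤ (i:ℝ) := by exact_mod_cast (Finset.mem_Icc.1 hi).1
      have hi0 : (0:ℝ) < (i:ℝ) := lt_of_lt_of_le one_pos hi1
      have hp : (0:ℝ) < 2 + (i:ℝ) * a := by nlinarith
      have hq : (0:ℝ) < 2 + (i:ℝ) * a' := by nlinarith
      have hdiff : V a i ω - V a' i ω
          = (2/(2 + (i:ℝ)*a) - 2/(2 + (i:ℝ)*a')) * U i ω := by
        rw [hV, hV]; ring
      rw [hdiff, abs_mul, abs_of_nonneg (h0 i)]
      have hcoef : |2/(2 + (i:ℝ)*a) - 2/(2 + (i:ℝ)*a')| ≤ K * (i:ℝ)⁻¹ := by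
        rw [div_sub_div _ _ hp.ne' hq.ne', abs_div, abs_of_pos (mul_pos hp hq)]
        have hnum : |2 * (2 + (i:ℝ)*a') - (2 + (i:ℝ)*a) * 2| = 2 * (i:ℝ) * |a - a'| := by
          rw [show 2 * (2 + (i:ℝ)*a') - (2 + (i:ℝ)*a) * 2 = (2 * (i:ℝ)) * (a' - a) by ring,
            abs_mul, abs_of_nonneg (by positivity : (0:ℝ) ≤ 2 * (i:ℝ)), abs_sub_comm]
        rw [hnum, hKdef]
        rw [div_le_iff₀ (mul_pos hp hq)]
        have habs : 0 ≤ |a - a'| := abs_nonneg _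
        have key : 2 * |a - a'| / (a * a') * (i:ℝ)⁻¹ * ((2 + (i:ℝ)*a) * (2 + (i:ℝ)*a'))
            = (2 * |a - a'|) * ((2 + (i:ℝ)*a) * (2 + (i:ℝ)*a')) / (a * a' * (i:ℝ)) := by
          field_simp
        rw [key, le_div_iff₀ (by positivity)]
        nlinarith [mul_nonneg habs (mul_pos hi0 ha).le, mul_nonneg habs (mul_pos hi0 ha').le,
          mul_nonneg habs (mul_pos (mul_pos hi0 hi0) (mul_pos ha ha')).le]
      calc |2/(2 + (i:ℝ)*a) - 2/(2 + (i:ℝ)*a')| * U i ω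
          ≤ (K * (i:ℝ)⁻¹) * U i ω := mul_le_mul_of_nonneg_right hcoef (h0 i)
        _ = K * X i ω := by rw [hXdef]; ring
    have hsumle : ∑ i ∈ Finset.Icc 1 d, |V a i ω - V a' i ω|
        ≤ K * ∑ i ∈ Finset.Icc 1 d, X i ω := by
      rw [Finset.mul_sum]
      exact Finset.sum_le_sum hterm
    have hT : ∑ i ∈ Finset.Icc 1 d, X i ω < 3 * Real.log d := by
      have := hdA
      rw [hAdef] at this
      simp only [Set.mem_setOf_eq, Finset.sum_apply, not_le] at this
      exact this
    have hS0 : ∑ i ∈ Finset.Icc 1 d, X i ω ≤ 3 * Real.log d := hT.le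
    calc (Real.log d)⁻¹ * ∑ i ∈ Finset.Icc 1 d, |V a i ω - V a' i ω|
        ≤ (Real.log d)⁻¹ * (K * (3 * Real.log d)) := by
          refine mul_le_mul_of_nonneg_left (hsumle.trans ?_) (by positivity)
          exact mul_le_mul_of_nonneg_left hS0 hK
      _ = 3 * K := by field_simp
  · -- second part
    filter_upwards [hU0] with ω h0
    refine Tendsto.limsup_eq ?_
    have htend : Tendsto (fun d : ℕ => ((2 + a)/a') / (d:ℝ)) atTop (nhds 0) :=
      tendsto_const_div_atTop_nhds_zero_nat _
    refine tendsto_of_tendsto_of_tendsto_of_le_of_le' tendsto_const_nhds htend ?_ ?_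
    · filter_upwards [eventually_ge_atTop 1] with d hd
      have hd0 : (0:ℝ) < (d:ℝ) := by exact_mod_cast hd
      have hpa : (0:ℝ) < 2 + (d:ℝ)*a := by nlinarith
      have hpa' : (0:ℝ) < 2 + (d:ℝ)*a' := by nlinarith
      rw [hV, hV]
      refine div_nonneg (mul_nonneg (by positivity) (h0 d)) ?_
      exact mul_nonneg hd0.le (mul_nonneg (by positivity) (h0 d))
    · filter_upwards [eventually_ge_atTop 1] with d hd
      have hd1 : (1:ℝ) ≤ (d:ℝ) := by exact_mod_cast hd
      have hd0 : (0:ℝ) < (d:ℝ) := lt_of_lt_of_le one_pos hd1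
      have hpa : (0:ℝ) < 2 + (d:ℝ)*a := by nlinarith
      have hpa' : (0:ℝ) < 2 + (d:ℝ)*a' := by nlinarith
      rw [hV, hV]
      rcases eq_or_lt_of_le (h0 d) with hu | hu
      · rw [← hu]
        simp
        positivity
      · have heq : (2/(2 + (d:ℝ)*a') * U d ω) / ((d:ℝ) * (2/(2 + (d:ℝ)*a) * U d ω))
            = (2 + (d:ℝ)*a) / ((d:ℝ) * (2 + (d:ℝ)*a')) := by
          field_simp
        rw [heq]
        rw [div_div]
        rw [div_le_div_iff₀ (by positivity) (by positivity)]
        nlinarith [mul_nonneg (mul_nonneg ha'.le hd0.le) (sub_nonneg.2 hd1),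
          mul_pos hd0 ha]
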